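/- Let A₁,…,Aₙ be a finite set of compatible observables and let ([G_λ])_{λ∈Λ} be a monotonically increasing net (with respect to the post-processing order ⪯) of equivalence classes of joint observables of A₁,…,Aₙ. Then there exists a joint observable G̃ of A₁,…,Aₙ such that G_λ ⪯ G̃ for every λ, and moreover for any observable B, if G_λ ⪯ B for all λ then G̃ ⪯ B. -/

import Mathlib

noncomputable section

open scoped BigOperators InnerProductSpace ComplexConjugate
open Filter Topology

variable {H : Type*} [NormedAddCommGroup H] [InnerProductSpace ℂ H] [CompleteSpace H]

/-- A Markov kernel from `Ω₂` to `Ω₁`: nonnegative entries, columns summing to 1. -/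
def IsMarkov {Ω₁ Ω₂ : Type*} [Fintype Ω₁] (p : Ω₁ → Ω₂ → ℝ) : Prop :=
  (∀ x y, 0 ≤ p x y) ∧ ∀ y, ∑ x, p x y = 1

/-- A finite-outcome observable (POVM): positive operators summing to the identity. -/
def IsObservable {Ω : Type*} [Fintype Ω] (A : Ω → H →L[ℂ] H) : Prop :=
  (∀ x, (A x).IsPositive) ∧ ∑ x, A x = 1

/-- Post-processing of `A` by the kernel `p`. -/
def pproc {Ω₁ Ω₂ : Type*} [Fintype Ω₂] (p : Ω₁ → Ω₂ → ℝ) (A : Ω₂ → H →L[ℂ] H) :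
    Ω₁ → H →L[ℂ] H := fun x => ∑ y, (p x y : ℂ) • A y

/-- `A ⪯ B` : `A` is a post-processing of `B`. -/
def PP {Ω₁ Ω₂ : Type*} [Fintype Ω₁] [Fintype Ω₂] (A : Ω₁ → H →L[ℂ] H)
    (B : Ω₂ → H →L[ℂ] H) : Prop := ∃ p, IsMarkov p ∧ A = pproc p B

/-- `G` is a joint observable of the observables `A ℓ`. -/
def IsJoint {n : ℕ} {Ω : Fin n → Type*} [∀ ℓ, Fintype (Ω ℓ)] [∀ ℓ, DecidableEq (Ω ℓ)]
    (A : ∀ ℓ, Ω ℓ → H →L[ℂ] H) (G : (∀ ℓ, Ω ℓ) → H →L[ℂ] H) : Prop :=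
  IsObservable G ∧ ∀ ℓ xℓ, (∑ x : ∀ ℓ, Ω ℓ, if x ℓ = xℓ then G x else 0) = A ℓ xℓ

/-- Effects of an observable have norm at most one. -/
lemma obs_norm_le {Ω : Type*} [Fintype Ω] {A : Ω → H →L[ℂ] H} (hA : IsObservable A) (x : Ω) :
    ‖A x‖ ≤ 1 := by
  have h0 : (0 : H →L[ℂ] H) ≤ A x := (ContinuousLinearMap.nonneg_iff_isPositive _).2 (hA.1 x)
  have h1 : A x ≤ 1 := by
    rw [← hA.2]
    exact Finset.single_le_sum
      (fun y _ => (ContinuousLinearMap.nonneg_iff_isPositive (A y)).2 (hA.1 y))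
      (Finset.mem_univ x)
  calc ‖A x‖ ≤ ‖(1 : H →L[ℂ] H)‖ := CStarAlgebra.norm_le_norm_of_nonneg_of_le h0 h1
    _ ≤ 1 := ContinuousLinearMap.norm_id_le

/-- A uniformly bounded family of operators has a weak-operator-topology limit along any
ultrafilter. -/
lemma exists_wot_limit {Λ : Type*} (U : Ultrafilter Λ) (T : Λ → H →L[ℂ] H)
    (hT : ∀ l, ‖T l‖ ≤ 1) :
    ∃ S : H →L[ℂ] H, ∀ u v : H,
      Tendsto (fun l => ⟪u, T l v⟫_ℂ) (U : Filter Λ) (𝓝 ⟪u, S v⟫_ℂ) := by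
  have key : ∀ u v : H, ∃ c : ℂ, ‖c‖ ≤ ‖u‖ * ‖v‖ ∧
      Tendsto (fun l => ⟪u, T l v⟫_ℂ) (U : Filter Λ) (𝓝 c) := by
    intro u v
    have hmem : ∀ l, ⟪u, T l v⟫_ℂ ∈ Metric.closedBall (0 : ℂ) (‖u‖ * ‖v‖) := by
      intro l
      rw [Metric.mem_closedBall, dist_zero_right]
      calc ‖⟪u, T l v⟫_ℂ‖ ≤ ‖u‖ * ‖T l v‖ := norm_inner_le_norm _ _
        _ ≤ ‖u‖ * (‖T l‖ * ‖v‖) := by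
            exact mul_le_mul_of_nonneg_left ((T l).le_opNorm v) (norm_nonneg u)
        _ ≤ ‖u‖ * (1 * ‖v‖) := by
            have := mul_le_mul_of_nonneg_right (hT l) (norm_nonneg v)
            exact mul_le_mul_of_nonneg_left this (norm_nonneg u)
        _ = ‖u‖ * ‖v‖ := by ring
    obtain ⟨c, hc, hle⟩ := (isCompact_closedBall (0 : ℂ) (‖u‖ * ‖v‖)).ultrafilter_le_nhds
      (U.map fun l => ⟪u, T l v⟫_ℂ)
      (by rw [Ultrafilter.coe_map, Filter.le_principal_iff, Filter.mem_map]
          exact Filter.univ_mem' fun l => hmem l)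
    exact ⟨c, by simpa [dist_zero_right] using Metric.mem_closedBall.1 hc, hle⟩
  choose c hcb hct using key
  have haddr : ∀ u v w : H, c u (v + w) = c u v + c u w := fun u v w =>
    tendsto_nhds_unique (hct u (v + w))
      (by simpa [inner_add_right] using (hct u v).add (hct u w))
  have hsmulr : ∀ (a : ℂ) (u v : H), c u (a • v) = a * c u v := fun a u v =>
    tendsto_nhds_unique (hct u (a • v))
      (by simpa [inner_smul_right] using (hct u v).const_mul a)
  have haddl : ∀ u u' v : H, c (u + u') v = c u v + c u' v := fun u u' v =>
    tendsto_nhds_unique (hct (u + u') v)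
      (by simpa [inner_add_left] using (hct u v).add (hct u' v))
  have hsmull : ∀ (a : ℂ) (u v : H), c (a • u) v = conj a * c u v := fun a u v =>
    tendsto_nhds_unique (hct (a • u) v)
      (by simpa [inner_smul_left, mul_comm] using (hct u v).const_mul (conj a))
  have hg : ∀ v : H, ∃ g : H →L[ℂ] ℂ, (∀ u, g u = conj (c u v)) ∧ ‖g‖ ≤ ‖v‖ := by
    intro v
    refine ⟨LinearMap.mkContinuous
      { toFun := fun u => conj (c u v)
        map_add' := fun u u' => by simp only [haddl, map_add]
        map_smul' := fun a u => by
          simp only [hsmull, map_mul, RingHom.id_apply, smul_eq_mul, Complex.conj_conj] } ‖v‖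
      (fun u => ?_), fun u => rfl, LinearMap.mkContinuous_norm_le _ (norm_nonneg v) _⟩
    simpa [mul_comm] using hcb u v
  choose g hgapp hgnorm using hg
  set S0 : H → H := fun v => (InnerProductSpace.toDual ℂ H).symm (g v) with hS0
  have hinner : ∀ u v : H, ⟪u, S0 v⟫_ℂ = c u v := by
    intro u v
    rw [← inner_conj_symm, hS0]
    simp only [InnerProductSpace.toDual_symm_apply]
    rw [hgapp]
    exact Complex.conj_conj _
  have hS0norm : ∀ v, ‖S0 v‖ ≤ ‖v‖ := by
    intro v
    have : ‖S0 v‖ = ‖g v‖ := (LinearIsometryEquiv.norm_map _ _ : _)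
    rw [this]; exact hgnorm v
  set S : H →L[ℂ] H := LinearMap.mkContinuous
    { toFun := S0
      map_add' := fun v w => ext_inner_left ℂ fun u => by
        rw [hinner, haddr, inner_add_right, hinner, hinner]
      map_smul' := fun a v => ext_inner_left ℂ fun u => by
        rw [hinner, hsmulr, RingHom.id_apply, inner_smul_right, hinner] } 1
    (fun v => by simpa using hS0norm v) with hSdef
  refine ⟨S, fun u v => ?_⟩
  have : ⟪u, S v⟫_ℂ = c u v := hinner u v
  rw [this]; exact hct u v

/-- A family of Markov kernels (eventually along an ultrafilter) has a limit kernel. -/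
lemma exists_kernel_limit {Λ : Type*} (U : Ultrafilter Λ) {Ω₁ Ω₂ : Type*} [Fintype Ω₁]
    [Fintype Ω₂] (p : Λ → Ω₁ → Ω₂ → ℝ) (hp : ∀ᶠ l in (U : Filter Λ), IsMarkov (p l)) :
    ∃ q : Ω₁ → Ω₂ → ℝ, IsMarkov q ∧
      ∀ x y, Tendsto (fun l => p l x y) (U : Filter Λ) (𝓝 (q x y)) := by
  have hmem : ∀ᶠ l in (U : Filter Λ), ∀ x y, p l x y ∈ Set.Icc (0:ℝ) 1 := by
    refine hp.mono fun l hl x y => ⟨hl.1 x y, ?_⟩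
    calc p l x y ≤ ∑ x', p l x' y :=
          Finset.single_le_sum (fun x' _ => hl.1 x' y) (Finset.mem_univ x)
      _ = 1 := hl.2 y
  set r : Λ → Ω₁ → Ω₂ → ℝ := fun l x y => max 0 (min 1 (p l x y)) with hr
  have hrmem : ∀ l x y, r l x y ∈ Set.Icc (0:ℝ) 1 :=
    fun l x y => ⟨le_max_left _ _, max_le zero_le_one (min_le_left _ _)⟩
  have hrp : ∀ᶠ l in (U : Filter Λ), ∀ x y, r l x y = p l x y := by
    refine hmem.mono fun l hl x y => ?_
    rw [hr]; simp only
    rw [min_eq_right (hl x y).2, max_eq_right (hl x y).1]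
  have key : ∀ x y, ∃ q ∈ Set.Icc (0:ℝ) 1,
      Tendsto (fun l => r l x y) (U : Filter Λ) (𝓝 q) := by
    intro x y
    obtain ⟨q, hq, hle⟩ := (isCompact_Icc (a := (0:ℝ)) (b := 1)).ultrafilter_le_nhds
      (U.map fun l => r l x y)
      (by rw [Ultrafilter.coe_map, Filter.le_principal_iff, Filter.mem_map]
          exact Filter.univ_mem' fun l => hrmem l x y)
    exact ⟨q, hq, hle⟩
  choose q hqmem hqt using key
  have hqt' : ∀ x y, Tendsto (fun l => p l x y) (U : Filter Λ) (𝓝 (q x y)) :=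
    fun x y => (hqt x y).congr' (hrp.mono fun l hl => hl x y)
  refine ⟨q, ⟨fun x y => (hqmem x y).1, fun y => ?_⟩, hqt'⟩
  have h1 : Tendsto (fun l => ∑ x, p l x y) (U : Filter Λ) (𝓝 (∑ x, q x y)) :=
    tendsto_finset_sum _ fun x _ => hqt' x y
  have h2 : Tendsto (fun l => ∑ x, p l x y) (U : Filter Λ) (𝓝 1) :=
    tendsto_const_nhds.congr' (hp.mono fun l hl => (hl.2 y).symm)
  exact tendsto_nhds_unique h1 h2

lemma inner_pproc {Ω₁ Ω₂ : Type*} [Fintype Ω₂] (p : Ω₁ → Ω₂ → ℝ) (A : Ω₂ → H →L[ℂ] H)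
    (x : Ω₁) (u v : H) :
    ⟪u, (pproc p A x) v⟫_ℂ = ∑ y, ((p x y : ℝ) : ℂ) * ⟪u, (A y) v⟫_ℂ := by
  show ⟪u, (∑ y, ((p x y : ℝ) : ℂ) • A y) v⟫_ℂ = _
  rw [ContinuousLinearMap.sum_apply, inner_sum]
  refine Finset.sum_congr rfl fun y _ => ?_
  rw [ContinuousLinearMap.smul_apply, inner_smul_right]

/-- A monotonically increasing net of joint observables has an upper bound among the
joint observables, which lower bounds every common upper bound. -/
theorem increasing_net_joint {n : ℕ} {Ω : Fin n → Type*}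
    [∀ ℓ, Fintype (Ω ℓ)] [∀ ℓ, DecidableEq (Ω ℓ)]
    {Λ : Type*} [Preorder Λ] [Nonempty Λ]
    (hdir : ∀ a b : Λ, ∃ c, a ≤ c ∧ b ≤ c)
    (A : ∀ ℓ, Ω ℓ → H →L[ℂ] H)
    (G : Λ → ((∀ ℓ, Ω ℓ) → H →L[ℂ] H))
    (hGj : ∀ l, IsJoint A (G l))
    (hmono : ∀ l l', l ≤ l' → PP (G l) (G l')) :
    ∃ Gt : (∀ ℓ, Ω ℓ) → H →L[ℂ] H, IsJoint A Gt ∧ (∀ l, PP (G l) Gt) ∧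
      ∀ (Ω' : Type) [Fintype Ω'], ∀ B : Ω' → H →L[ℂ] H, IsObservable B →
        (∀ l, PP (G l) B) → PP Gt B := by
  classical
  haveI hdirI : IsDirected Λ (· ≤ ·) := ⟨hdir⟩
  haveI : (atTop : Filter Λ).NeBot := Filter.atTop_neBot_iff.mpr ⟨‹Nonempty Λ›, hdirI⟩
  set U : Ultrafilter Λ := Ultrafilter.of atTop with hUdef
  have hU : (U : Filter Λ) ≤ atTop := Ultrafilter.of_le atTop
  have key := fun x : (∀ ℓ, Ω ℓ) =>
    exists_wot_limit U (fun l => G l x) (fun l => obs_norm_le (hGj l).1 x)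
  choose Gt hGt using key
  -- each effect of Gt is positive
  have hpos : ∀ x, (Gt x).IsPositive := by
    intro x
    rw [ContinuousLinearMap.isPositive_iff_complex]
    intro v
    have hl' : ∀ l, ((RCLike.re ⟪(G l x) v, v⟫_ℂ : ℝ) : ℂ) = ⟪(G l x) v, v⟫_ℂ ∧
        0 ≤ RCLike.re ⟪(G l x) v, v⟫_ℂ := fun l =>
      (ContinuousLinearMap.isPositive_iff_complex (G l x)).1 ((hGj l).1.1 x) v
    have ht : Tendsto (fun l => ⟪(G l x) v, v⟫_ℂ) (U : Filter Λ) (𝓝 ⟪(Gt x) v, v⟫_ℂ) := by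
      have hconj : Tendsto (fun l => (starRingEnd ℂ) ⟪v, (G l x) v⟫_ℂ) (U : Filter Λ)
          (𝓝 ((starRingEnd ℂ) ⟪v, (Gt x) v⟫_ℂ)) :=
        (Complex.continuous_conj.tendsto _).comp (hGt x v v)
      simpa [inner_conj_symm] using hconj
    have htre : Tendsto (fun l => RCLike.re ⟪(G l x) v, v⟫_ℂ) (U : Filter Λ)
        (𝓝 (RCLike.re ⟪(Gt x) v, v⟫_ℂ)) := (RCLike.continuous_re.tendsto _).comp ht
    constructor
    · have h1 : Tendsto (fun l => ((RCLike.re ⟪(G l x) v, v⟫_ℂ : ℝ) : ℂ)) (U : Filter Λ)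
          (𝓝 ((RCLike.re ⟪(Gt x) v, v⟫_ℂ : ℝ) : ℂ)) :=
        (RCLike.continuous_ofReal.tendsto _).comp htre
      exact tendsto_nhds_unique (h1.congr fun l => (hl' l).1) ht
    · exact ge_of_tendsto' htre fun l => (hl' l).2
  -- the effects of Gt sum to one
  have hsum : ∑ x, Gt x = 1 := by
    refine ContinuousLinearMap.ext fun v => ext_inner_left ℂ fun u => ?_
    have h1 : Tendsto (fun l => ∑ x, ⟪u, (G l x) v⟫_ℂ) (U : Filter Λ)
        (𝓝 (∑ x, ⟪u, (Gt x) v⟫_ℂ)) := tendsto_finset_sum _ fun x _ => hGt x u v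
    have h2 : ∀ l, ∑ x, ⟪u, (G l x) v⟫_ℂ = ⟪u, v⟫_ℂ := by
      intro l
      calc ∑ x, ⟪u, (G l x) v⟫_ℂ = ⟪u, (∑ x, G l x) v⟫_ℂ := by
            simp [ContinuousLinearMap.sum_apply, inner_sum]
        _ = ⟪u, v⟫_ℂ := by rw [(hGj l).1.2]; simp
    have h3 := tendsto_nhds_unique (h1.congr h2) tendsto_const_nhds
    calc ⟪u, (∑ x, Gt x) v⟫_ℂ = ∑ x, ⟪u, (Gt x) v⟫_ℂ := by
          simp [ContinuousLinearMap.sum_apply, inner_sum]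
      _ = ⟪u, v⟫_ℂ := h3
      _ = ⟪u, (1 : H →L[ℂ] H) v⟫_ℂ := by simp
  -- the marginals of Gt are the A ℓ
  have hmarg : ∀ ℓ xℓ, (∑ x : ∀ ℓ, Ω ℓ, if x ℓ = xℓ then Gt x else 0) = A ℓ xℓ := by
    intro ℓ xℓ
    refine ContinuousLinearMap.ext fun v => ext_inner_left ℂ fun u => ?_
    have h1 : Tendsto (fun l => ∑ x, ⟪u, ((if x ℓ = xℓ then G l x else 0) : H →L[ℂ] H) v⟫_ℂ)
        (U : Filter Λ) (𝓝 (∑ x, ⟪u, ((if x ℓ = xℓ then Gt x else 0) : H →L[ℂ] H) v⟫_ℂ)) := by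
      refine tendsto_finset_sum _ fun x _ => ?_
      by_cases h : x ℓ = xℓ
      · simp only [if_pos h]; exact hGt x u v
      · simp only [if_neg h]; exact tendsto_const_nhds
    have h2 : ∀ l, ∑ x, ⟪u, ((if x ℓ = xℓ then G l x else 0) : H →L[ℂ] H) v⟫_ℂ =
        ⟪u, (A ℓ xℓ) v⟫_ℂ := by
      intro l
      calc ∑ x, ⟪u, ((if x ℓ = xℓ then G l x else 0) : H →L[ℂ] H) v⟫_ℂ
          = ⟪u, ((∑ x : ∀ ℓ, Ω ℓ, if x ℓ = xℓ then G l x else 0) : H →L[ℂ] H) v⟫_ℂ := by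
            simp [ContinuousLinearMap.sum_apply, inner_sum]
        _ = ⟪u, (A ℓ xℓ) v⟫_ℂ := by rw [(hGj l).2 ℓ xℓ]
    have h3 := tendsto_nhds_unique (h1.congr h2) tendsto_const_nhds
    calc ⟪u, ((∑ x : ∀ ℓ, Ω ℓ, if x ℓ = xℓ then Gt x else 0) : H →L[ℂ] H) v⟫_ℂ
        = ∑ x, ⟪u, ((if x ℓ = xℓ then Gt x else 0) : H →L[ℂ] H) v⟫_ℂ := by
          simp [ContinuousLinearMap.sum_apply, inner_sum]
      _ = ⟪u, (A ℓ xℓ) v⟫_ℂ := h3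
  refine ⟨Gt, ⟨⟨hpos, hsum⟩, hmarg⟩, ?_, ?_⟩
  · -- every G l is a post-processing of Gt
    intro l
    have hev : ∀ᶠ l' in (U : Filter Λ), l ≤ l' := hU (eventually_ge_atTop l)
    set p : Λ → (∀ ℓ, Ω ℓ) → (∀ ℓ, Ω ℓ) → ℝ :=
      fun l' => if h : l ≤ l' then (hmono l l' h).choose else fun _ _ => 0 with hpdef
    have hpm : ∀ l', l ≤ l' → IsMarkov (p l') ∧ G l = pproc (p l') (G l') := by
      intro l' h
      rw [hpdef]; simp only [dif_pos h]
      exact ⟨(hmono l l' h).choose_spec.1, (hmono l l' h).choose_spec.2⟩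
    obtain ⟨q, hqm, hqt⟩ := exists_kernel_limit U p (hev.mono fun l' h => (hpm l' h).1)
    refine ⟨q, hqm, funext fun x => ?_⟩
    refine ContinuousLinearMap.ext fun v => ext_inner_left ℂ fun u => ?_
    have h1 : Tendsto (fun l' => ∑ y, ((p l' x y : ℝ) : ℂ) * ⟪u, (G l' y) v⟫_ℂ) (U : Filter Λ)
        (𝓝 (∑ y, ((q x y : ℝ) : ℂ) * ⟪u, (Gt y) v⟫_ℂ)) :=
      tendsto_finset_sum _ fun y _ =>
        ((Complex.continuous_ofReal.tendsto _).comp (hqt x y)).mul (hGt y u v)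
    have h2 : (fun l' => ∑ y, ((p l' x y : ℝ) : ℂ) * ⟪u, (G l' y) v⟫_ℂ) =ᶠ[(U : Filter Λ)]
        fun _ => ⟪u, (G l x) v⟫_ℂ :=
      hev.mono fun l' h => by
        show ∑ y, ((p l' x y : ℝ) : ℂ) * ⟪u, (G l' y) v⟫_ℂ = ⟪u, (G l x) v⟫_ℂ
        rw [← inner_pproc, ← (hpm l' h).2]
    have h3 := tendsto_nhds_unique (h1.congr' h2) tendsto_const_nhds
    rw [inner_pproc, ← h3]
  · -- Gt is a post-processing of every common upper bound
    intro Ω' _ B hB hPB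
    choose p hpm hpe using hPB
    obtain ⟨q, hqm, hqt⟩ := exists_kernel_limit U p (Filter.Eventually.of_forall hpm)
    refine ⟨q, hqm, funext fun x => ?_⟩
    refine ContinuousLinearMap.ext fun v => ext_inner_left ℂ fun u => ?_
    have h1 : Tendsto (fun l => ∑ y, ((p l x y : ℝ) : ℂ) * ⟪u, (B y) v⟫_ℂ) (U : Filter Λ)
        (𝓝 (∑ y, ((q x y : ℝ) : ℂ) * ⟪u, (B y) v⟫_ℂ)) :=
      tendsto_finset_sum _ fun y _ =>
        ((Complex.continuous_ofReal.tendsto _).comp (hqt x y)).mul tendsto_const_nhds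
    have h2 : (fun l => ∑ y, ((p l x y : ℝ) : ℂ) * ⟪u, (B y) v⟫_ℂ) =ᶠ[(U : Filter Λ)]
        fun l => ⟪u, (G l x) v⟫_ℂ :=
      Filter.Eventually.of_forall fun l => by
        show ∑ y, ((p l x y : ℝ) : ℂ) * ⟪u, (B y) v⟫_ℂ = ⟪u, (G l x) v⟫_ℂ
        rw [← inner_pproc, ← hpe l]
    have h3 := tendsto_nhds_unique (h1.congr' h2) (hGt x u v)
    rw [inner_pproc, ← h3]
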